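/- The Killing vector fields Q^i_j = x^i ∂_{x^j} − p_j ∂_{p_i}, X_k = ∂_{x^k}, and D^s = (x^s/2)Q + (1 − ½⟨x,p⟩)∂_{p_s} of the metric G̃ on P̃ satisfy the commutator relations [Q^i_j, Q^p_k] = δ^p_j Q^i_k − δ^i_k Q^p_j, [Q^i_j, X_s] = −δ^i_s X_j, [Q^i_j, D^s] = δ^s_j D^i, [D^i, D^j] = 0, [X_i, X_j] = 0, and [X_s, D^i] = ½ Q^i_s + ½ δ^i_s Q; moreover each of them is Hamiltonian for the symplectic form ω = Σ_{i=0}^n dp_i ∧ dx^i: for every point m ∈ P̃ and every w ∈ ℝ^{2n+2}, ω(Q^i_j(m), w) = d(−x^i p_j)(m)(w), ω(X_k(m), w) = d(−p_k)(m)(w), and ω(D^s(m), w) = d(x^s (1 − ½⟨x,p⟩))(m)(w). -/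

import Mathlib

/-!
Statement 15: The Killing fields `Q^i_j = x^i ∂_{x^j} - p_j ∂_{p_i}`,
`X_k = ∂_{x^k}`, `D^s = (x^s/2)Q + (1 - ½⟨x,p⟩)∂_{p_s}` of `G̃` satisfy
`[Q^i_j, Q^p_k] = δ^p_j Q^i_k - δ^i_k Q^p_j`, `[Q^i_j, X_s] = -δ^i_s X_j`,
`[Q^i_j, D^s] = δ^s_j D^i`, `[D^i, D^j] = 0`, `[X_i, X_j] = 0`,
`[X_s, D^i] = ½ Q^i_s + ½ δ^i_s Q`, and are Hamiltonian for
`ω = Σ dp_i ∧ dx^i` with Hamiltonians `-x^i p_j`, `-p_k`, `x^s(1 - ½⟨x,p⟩)`.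
-/

abbrev Idx2 (n : ℕ) : Type := Fin (n + 1) ⊕ Fin (n + 1)
abbrev Pt2 (n : ℕ) : Type := Idx2 n → ℝ

/-- Lie bracket of vector fields on `P̃`: `[U,V] = (DV)U - (DU)V`. -/
noncomputable def bkt (n : ℕ) (U V : Pt2 n → Pt2 n) : Pt2 n → Pt2 n := fun m =>
  fderiv ℝ V m (U m) - fderiv ℝ U m (V m)

/-- The constant symplectic form `ω(u,v) = Σ_i (u^{p_i} v^{x^i} - u^{x^i} v^{p_i})`. -/
noncomputable def omegaAp {n : ℕ} (u v : Pt2 n) : ℝ :=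
  ∑ i, (u (Sum.inl i) * v (Sum.inr i) - u (Sum.inr i) * v (Sum.inl i))

/-- `X_k = ∂_{x^k}`. -/
noncomputable def XsVF (n : ℕ) (s : Fin (n + 1)) : Pt2 n → Pt2 n :=
  fun _ => Pi.single (Sum.inr s) 1

/-- `Q^i_j = x^i ∂_{x^j} - p_j ∂_{p_i}`. -/
noncomputable def QijVF (n : ℕ) (i j : Fin (n + 1)) : Pt2 n → Pt2 n := fun m =>
  m (Sum.inr i) • (Pi.single (Sum.inr j) 1 : Pt2 n) -
    m (Sum.inl j) • (Pi.single (Sum.inl i) 1 : Pt2 n)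

/-- `Q = Σ_s (x^s ∂_{x^s} - p_s ∂_{p_s})`. -/
noncomputable def QVF (n : ℕ) : Pt2 n → Pt2 n := fun m a =>
  match a with
  | Sum.inl l => -m (Sum.inl l)
  | Sum.inr l => m (Sum.inr l)

/-- `D^s = (x^s/2) Q + (1 - ½⟨x,p⟩) ∂_{p_s}`. -/
noncomputable def DiVF (n : ℕ) (s : Fin (n + 1)) : Pt2 n → Pt2 n := fun m =>
  (m (Sum.inr s) / 2) • QVF n m +
    (1 - (1 / 2 : ℝ) * ∑ l, m (Sum.inr l) * m (Sum.inl l)) •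
      (Pi.single (Sum.inl s) 1 : Pt2 n)


-- ### Auxiliary definitions and derivative lemmas

noncomputable def projL (n : ℕ) (a : Idx2 n) : Pt2 n →L[ℝ] ℝ :=
  ContinuousLinearMap.proj a

@[simp] lemma projL_apply {n : ℕ} (a : Idx2 n) (v : Pt2 n) : projL n a v = v a := rfl

noncomputable def QijL (n : ℕ) (i j : Fin (n + 1)) : Pt2 n →L[ℝ] Pt2 n :=
  (projL n (.inr i)).smulRight (Pi.single (.inr j) 1) -
    (projL n (.inl j)).smulRight (Pi.single (.inl i) 1)

@[simp] lemma QijL_apply {n : ℕ} (i j : Fin (n + 1)) (v : Pt2 n) :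
    QijL n i j v = QijVF n i j v := by
  simp [QijL, QijVF]

lemma hasFDerivAt_Qij {n : ℕ} (i j : Fin (n + 1)) (m : Pt2 n) :
    HasFDerivAt (QijVF n i j) (QijL n i j) m := by
  have h : QijVF n i j = ⇑(QijL n i j) := funext fun v => (QijL_apply i j v).symm
  rw [h]; exact (QijL n i j).hasFDerivAt

noncomputable def QL (n : ℕ) : Pt2 n →L[ℝ] Pt2 n :=
  ContinuousLinearMap.pi fun a =>
    match a with
    | Sum.inl l => -projL n (.inl l)
    | Sum.inr l => projL n (.inr l)

@[simp] lemma QL_apply {n : ℕ} (v : Pt2 n) : QL n v = QVF n v := by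
  funext a
  cases a <;> simp [QL, QVF]

lemma hasFDerivAt_Q {n : ℕ} (m : Pt2 n) : HasFDerivAt (QVF n) (QL n) m := by
  have h : QVF n = ⇑(QL n) := funext fun v => (QL_apply v).symm
  rw [h]; exact (QL n).hasFDerivAt

noncomputable def gD (n : ℕ) (m : Pt2 n) : Pt2 n →L[ℝ] ℝ :=
  -((1 / 2 : ℝ) • ∑ l, (m (Sum.inr l) • projL n (.inl l) + m (Sum.inl l) • projL n (.inr l)))

@[simp] lemma gD_apply {n : ℕ} (m w : Pt2 n) :
    gD n m w =
      -((1 / 2 : ℝ) * ∑ l, (m (Sum.inr l) * w (Sum.inl l) + m (Sum.inl l) * w (Sum.inr l))) := by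
  simp [gD, Finset.mul_sum]

lemma hasFDerivAt_g {n : ℕ} (m : Pt2 n) :
    HasFDerivAt (fun m : Pt2 n => 1 - (1 / 2 : ℝ) * ∑ l, m (Sum.inr l) * m (Sum.inl l))
      (gD n m) m := by
  have h : ∀ l : Fin (n + 1), HasFDerivAt
      (fun m : Pt2 n => m (Sum.inr l) * m (Sum.inl l))
      (m (Sum.inr l) • projL n (.inl l) + m (Sum.inl l) • projL n (.inr l)) m := by
    intro l
    have := (hasFDerivAt_apply (𝕜 := ℝ) (Sum.inr l) m).mul
      (hasFDerivAt_apply (𝕜 := ℝ) (Sum.inl l) m)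
    convert this using 2 <;> rfl
  have hs := HasFDerivAt.fun_sum (fun l (_ : l ∈ Finset.univ) => h l)
  have := (hs.const_mul (1 / 2 : ℝ)).const_sub 1
  convert this using 1 <;> rfl

noncomputable def DiD (n : ℕ) (s : Fin (n + 1)) (m : Pt2 n) : Pt2 n →L[ℝ] Pt2 n :=
  ((m (Sum.inr s) / 2) • QL n + ((1 / 2 : ℝ) • projL n (.inr s)).smulRight (QVF n m)) +
    (gD n m).smulRight (Pi.single (.inl s) 1)

lemma hasFDerivAt_Di {n : ℕ} (s : Fin (n + 1)) (m : Pt2 n) :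
    HasFDerivAt (DiVF n s) (DiD n s m) m := by
  have h1 : HasFDerivAt (fun m : Pt2 n => m (Sum.inr s) / 2)
      ((1 / 2 : ℝ) • projL n (.inr s)) m := by
    have := (hasFDerivAt_apply (𝕜 := ℝ) (Sum.inr s) m).const_mul (1 / 2 : ℝ)
    have he : (fun m : Pt2 n => m (Sum.inr s) / 2)
        = fun m : Pt2 n => (1 / 2 : ℝ) * m (Sum.inr s) := by
      funext m; ring
    rw [he]; exact this
  have h2 := h1.smul (hasFDerivAt_Q m)
  have h3 := (hasFDerivAt_g m).smul_const (Pi.single (Sum.inl s) 1 : Pt2 n)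
  exact h2.add h3

@[simp] lemma fderiv_Qij {n : ℕ} (i j : Fin (n + 1)) (m : Pt2 n) :
    fderiv ℝ (QijVF n i j) m = QijL n i j := (hasFDerivAt_Qij i j m).fderiv

@[simp] lemma fderiv_Xs {n : ℕ} (s : Fin (n + 1)) (m : Pt2 n) :
    fderiv ℝ (XsVF n s) m = 0 := by
  unfold XsVF; exact (hasFDerivAt_const _ _).fderiv

@[simp] lemma fderiv_Di {n : ℕ} (s : Fin (n + 1)) (m : Pt2 n) :
    fderiv ℝ (DiVF n s) m = DiD n s m := (hasFDerivAt_Di s m).fderiv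

@[simp] lemma DiD_apply {n : ℕ} (s : Fin (n + 1)) (m w : Pt2 n) :
    DiD n s m w = (m (Sum.inr s) / 2) • QVF n w + (w (Sum.inr s) / 2) • QVF n m +
      gD n m w • (Pi.single (Sum.inl s) 1 : Pt2 n) := by
  funext a
  simp [DiD]
  cases a <;> simp [QVF, Pi.single_apply] <;> exact Or.inl (by ring)

set_option maxHeartbeats 2000000 in
theorem killing_fields_commutators_and_hamiltonians (n : ℕ) (hn : 1 ≤ n) :
    -- commutator relations
    (∀ i j p k : Fin (n + 1),
      bkt n (QijVF n i j) (QijVF n p k) = fun m =>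
        (if p = j then (1 : ℝ) else 0) • QijVF n i k m -
          (if i = k then (1 : ℝ) else 0) • QijVF n p j m) ∧
    (∀ i j s : Fin (n + 1),
      bkt n (QijVF n i j) (XsVF n s) = fun m =>
        -((if i = s then (1 : ℝ) else 0) • XsVF n j m)) ∧
    (∀ i j s : Fin (n + 1),
      bkt n (QijVF n i j) (DiVF n s) = fun m =>
        (if s = j then (1 : ℝ) else 0) • DiVF n i m) ∧
    (∀ i j : Fin (n + 1), bkt n (DiVF n i) (DiVF n j) = fun _ => 0) ∧
    (∀ i j : Fin (n + 1), bkt n (XsVF n i) (XsVF n j) = fun _ => 0) ∧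
    (∀ s i : Fin (n + 1),
      bkt n (XsVF n s) (DiVF n i) = fun m =>
        (1 / 2 : ℝ) • QijVF n i s m +
          ((1 / 2 : ℝ) * if i = s then 1 else 0) • QVF n m) ∧
    -- Hamiltonian property
    (∀ (i j : Fin (n + 1)) (m w : Pt2 n),
      omegaAp (QijVF n i j m) w =
        fderiv ℝ (fun m' => -(m' (Sum.inr i) * m' (Sum.inl j))) m w) ∧
    (∀ (k : Fin (n + 1)) (m w : Pt2 n),
      omegaAp (XsVF n k m) w = fderiv ℝ (fun m' => -m' (Sum.inl k)) m w) ∧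
    (∀ (s : Fin (n + 1)) (m w : Pt2 n),
      omegaAp (DiVF n s m) w =
        fderiv ℝ (fun m' => m' (Sum.inr s) *
          (1 - (1 / 2 : ℝ) * ∑ l, m' (Sum.inr l) * m' (Sum.inl l))) m w) := by
  refine ⟨?_, ?_, ?_, ?_, ?_, ?_, ?_, ?_, ?_⟩
  · -- [Q^i_j, Q^p_k]
    intro i j p k
    funext m a
    simp only [bkt, fderiv_Qij, QijL_apply]
    cases a <;>
      simp [QijVF, Pi.single_apply, Pi.sub_apply, mul_sub, sub_mul] <;>
      (try split_ifs) <;> (try subst_vars) <;> (try simp_all [QVF, Pi.single_apply]) <;> (try ring)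
  · -- [Q^i_j, X_s]
    intro i j s
    funext m a
    simp only [bkt, fderiv_Qij, fderiv_Xs, ContinuousLinearMap.zero_apply, QijL_apply]
    cases a <;>
      simp [QijVF, XsVF, Pi.single_apply, mul_ite, ite_mul] <;>
      (try split_ifs) <;> (try subst_vars) <;> (try simp_all [QVF, Pi.single_apply]) <;> (try ring)
  · -- [Q^i_j, D^s]
    intro i j s
    funext m a
    simp only [bkt, fderiv_Qij, fderiv_Di, DiD_apply, QijL_apply]
    cases a <;>
      simp [QijVF, QVF, DiVF, Pi.single_apply, gD_apply, mul_ite, ite_mul, mul_add, add_mul,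
        mul_sub, sub_mul, Finset.sum_add_distrib, Finset.sum_sub_distrib,
        Finset.sum_ite_eq, Finset.sum_ite_eq', mul_comm, mul_left_comm, mul_assoc,
        ← Finset.mul_sum, Pi.smul_apply, smul_eq_mul] <;>
      (try split_ifs) <;> (try subst_vars) <;> (try simp_all [QVF, Pi.single_apply]) <;> (try ring)
  · -- [D^i, D^j]
    intro i j
    funext m a
    simp only [bkt, fderiv_Di, DiD_apply]
    cases a <;>
      simp [QVF, DiVF, Pi.single_apply, gD_apply, mul_ite, ite_mul, mul_add, add_mul,
        mul_sub, sub_mul, Finset.sum_add_distrib, Finset.sum_sub_distrib,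
        Finset.sum_ite_eq, Finset.sum_ite_eq', mul_comm, mul_left_comm, mul_assoc,
        ← Finset.mul_sum, Pi.smul_apply, smul_eq_mul] <;>
      (try split_ifs) <;> (try subst_vars) <;> (try simp_all [QVF, Pi.single_apply]) <;> (try ring)
  · -- [X_i, X_j]
    intro i j
    funext m a
    simp [bkt]
  · -- [X_s, D^i]
    intro s i
    funext m a
    simp only [bkt, fderiv_Xs, fderiv_Di, DiD_apply, ContinuousLinearMap.zero_apply]
    cases a <;>
      simp [QVF, QijVF, XsVF, Pi.single_apply, gD_apply, mul_ite, ite_mul, mul_add, add_mul,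
        mul_sub, sub_mul, Finset.sum_add_distrib, Finset.sum_sub_distrib,
        Finset.sum_ite_eq, Finset.sum_ite_eq', mul_comm, mul_left_comm, mul_assoc,
        ← Finset.mul_sum, Pi.smul_apply, smul_eq_mul] <;>
      (try split_ifs) <;> (try subst_vars) <;> (try simp_all [QVF, Pi.single_apply]) <;> (try ring)
  · -- Hamiltonian for Q^i_j
    intro i j m w
    have h : HasFDerivAt (fun m' : Pt2 n => -(m' (Sum.inr i) * m' (Sum.inl j)))
        (-(m (Sum.inr i) • projL n (.inl j) + m (Sum.inl j) • projL n (.inr i))) m := by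
      have := ((hasFDerivAt_apply (𝕜 := ℝ) (Sum.inr i) m).mul
        (hasFDerivAt_apply (𝕜 := ℝ) (Sum.inl j) m)).neg
      convert this using 2 <;> rfl
    rw [h.fderiv]
    simp [omegaAp, QijVF, Pi.single_apply, mul_ite, ite_mul, Finset.sum_sub_distrib,
      Finset.sum_ite_eq, Finset.sum_ite_eq']
    ring
  · -- Hamiltonian for X_k
    intro k m w
    have h : HasFDerivAt (fun m' : Pt2 n => -m' (Sum.inl k)) (-projL n (.inl k)) m :=
      (hasFDerivAt_apply (𝕜 := ℝ) (Sum.inl k) m).neg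
    rw [h.fderiv]
    simp [omegaAp, XsVF, Pi.single_apply, mul_ite, ite_mul, Finset.sum_sub_distrib,
      Finset.sum_ite_eq, Finset.sum_ite_eq']
  · -- Hamiltonian for D^s
    intro s m w
    have h : HasFDerivAt (fun m' : Pt2 n => m' (Sum.inr s) *
        (1 - (1 / 2 : ℝ) * ∑ l, m' (Sum.inr l) * m' (Sum.inl l)))
        (m (Sum.inr s) • gD n m +
          (1 - (1 / 2 : ℝ) * ∑ l, m (Sum.inr l) * m (Sum.inl l)) • projL n (.inr s)) m :=
      (hasFDerivAt_apply (𝕜 := ℝ) (Sum.inr s) m).mul (hasFDerivAt_g m)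
    rw [h.fderiv]
    have hcomp : ∀ x : Fin (n + 1),
        (DiVF n s m (Sum.inl x) * w (Sum.inr x) - DiVF n s m (Sum.inr x) * w (Sum.inl x)) =
        (if x = s then (1 - (1 / 2 : ℝ) * ∑ l, m (Sum.inr l) * m (Sum.inl l)) * w (Sum.inr x)
          else 0) -
          (m (Sum.inr s) / 2) *
            (m (Sum.inr x) * w (Sum.inl x) + m (Sum.inl x) * w (Sum.inr x)) := by
      intro x
      simp [DiVF, QVF, Pi.single_apply]
      split_ifs <;> ring
    rw [omegaAp, Finset.sum_congr rfl fun x _ => hcomp x, Finset.sum_sub_distrib,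
      ← Finset.mul_sum, Finset.sum_ite_eq']
    simp [gD_apply]
    ring
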